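/- Smoothing preserves classicality: if ρ_{PQ} is a classical-quantum state with Q classical in the eigenbasis of σ_Q and ρ'_{PQ} ∈ B^ε(ρ_{PQ}) achieves the minimum of D_max(ρ'_{PQ} ‖ ρ'_P ⊗ σ_Q) over the ε-ball, then the state ρ''_{PQ} obtained by measuring ρ'_{PQ} in the eigenbasis of σ_Q satisfies ρ''_{PQ} ∈ B^ε(ρ_{PQ}) and D_max(ρ''_{PQ} ‖ ρ''_P ⊗ σ_Q) ≤ D_max(ρ'_{PQ} ‖ ρ'_P ⊗ σ_Q). -/

import Mathlib

open scoped Matrix Kronecker BigOperators ComplexOrder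
open Matrix

noncomputable section

namespace QIT

variable {n : Type*} [Fintype n] [DecidableEq n]

/-- Functional calculus for Hermitian matrices (junk value `0` otherwise). -/
def hcfc (A : Matrix n n ℂ) (f : ℝ → ℝ) : Matrix n n ℂ :=
  if h : A.IsHermitian then
    (h.eigenvectorUnitary : Matrix n n ℂ) * Matrix.diagonal ((↑) ∘ f ∘ h.eigenvalues) *
      (star h.eigenvectorUnitary : Matrix n n ℂ)
  else 0

/-- Positive semidefinite square root (junk otherwise). -/
def msqrt (A : Matrix n n ℂ) : Matrix n n ℂ := hcfc A Real.sqrt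

/-- Matrix logarithm on the support (log 0 = 0). -/
def mlog (A : Matrix n n ℂ) : Matrix n n ℂ := hcfc A Real.log

/-- Trace norm. -/
def traceNorm (A : Matrix n n ℂ) : ℝ := ((msqrt (Aᴴ * A)).trace).re

/-- Fidelity `‖√ρ√σ‖₁`. -/
def fidelity (ρ σ : Matrix n n ℂ) : ℝ := traceNorm (msqrt ρ * msqrt σ)

/-- Purified distance. -/
def purifiedDist (ρ σ : Matrix n n ℂ) : ℝ := Real.sqrt (1 - (fidelity ρ σ) ^ 2)

/-- A density matrix. -/
def IsState (ρ : Matrix n n ℂ) : Prop := ρ.PosSemidef ∧ ρ.trace = 1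

/-- Max-relative entropy (base 2). -/
def Dmax (ρ σ : Matrix n n ℂ) : ℝ := sInf {l : ℝ | ((2 : ℝ) ^ l • σ - ρ).PosSemidef}

/-- Smooth max-relative entropy. -/
def DmaxSmooth (ε : ℝ) (ρ σ : Matrix n n ℂ) : ℝ :=
  sInf {x : ℝ | ∃ ρ' : Matrix n n ℂ, IsState ρ' ∧ purifiedDist ρ' ρ ≤ ε ∧ x = Dmax ρ' σ}

/-- Umegaki relative entropy, in bits. -/
def relEnt (ρ σ : Matrix n n ℂ) : ℝ := ((ρ * (mlog ρ - mlog σ)).trace).re / Real.log 2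

/-- Partial trace over the second factor. -/
def ptraceRight {α β : Type*} [Fintype β] (M : Matrix (α × β) (α × β) ℂ) : Matrix α α ℂ :=
  Matrix.of fun i j => ∑ b, M (i, b) (j, b)

/-- Partial trace over the first factor. -/
def ptraceLeft {α β : Type*} [Fintype α] (M : Matrix (α × β) (α × β) ℂ) : Matrix β β ℂ :=
  Matrix.of fun i j => ∑ a, M (a, i) (a, j)

end QIT


open QIT

section SPCAux

set_option linter.unusedSectionVars false in
section
variable {n : Type*} [Fintype n] [DecidableEq n]

open scoped MatrixOrder in
private lemma msqrt_eq {A : Matrix n n ℂ} (hA : A.PosSemidef) : msqrt A = CFC.sqrt A := by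
  rw [CFC.sqrt_eq_real_sqrt A (Matrix.nonneg_iff_posSemidef.mpr hA),
    cfcₙ_eq_cfc (hf0 := Real.sqrt_zero), hA.1.cfc_eq]
  rw [msqrt, hcfc, dif_pos hA.1]; rfl

open scoped MatrixOrder in
private lemma msqrt_posSemidef {A : Matrix n n ℂ} (hA : A.PosSemidef) :
    (msqrt A).PosSemidef := by
  rw [msqrt_eq hA]; exact Matrix.nonneg_iff_posSemidef.mp (CFC.sqrt_nonneg A)

open scoped MatrixOrder in
private lemma msqrt_mul_self {A : Matrix n n ℂ} (hA : A.PosSemidef) :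
    msqrt A * msqrt A = A := by
  rw [msqrt_eq hA]; exact CFC.sqrt_mul_sqrt_self A (Matrix.nonneg_iff_posSemidef.mpr hA)

open scoped MatrixOrder in
private lemma msqrt_unique {A B : Matrix n n ℂ} (hA : A.PosSemidef) (hB : B.PosSemidef)
    (h : B * B = A) : msqrt A = B := by
  rw [msqrt_eq hA]
  exact (CFC.sqrt_eq_iff A B (Matrix.nonneg_iff_posSemidef.mpr hA) (Matrix.nonneg_iff_posSemidef.mpr hB)).mpr h

private lemma psd_diag_nonneg {A : Matrix n n ℂ} (hA : A.PosSemidef) (i : n) : 0 ≤ A i i := by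
  have h := hA.dotProduct_mulVec_nonneg (Pi.single i 1)
  simpa [dotProduct, Matrix.mulVec, Pi.single_apply] using h

private lemma psd_trace_re_nonneg {A : Matrix n n ℂ} (hA : A.PosSemidef) : 0 ≤ A.trace.re := by
  rw [Matrix.trace]
  have : (0:ℝ) ≤ (∑ i, A.diag i).re := by
    rw [Complex.re_sum]
    exact Finset.sum_nonneg fun i _ => (Complex.nonneg_iff.mp (psd_diag_nonneg hA i)).1
  exact this

private lemma trace_msqrt_re {A : Matrix n n ℂ} (hA : A.PosSemidef) :
    (msqrt A).trace.re = ∑ i, Real.sqrt (hA.1.eigenvalues i) := by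
  rw [msqrt, hcfc, dif_pos hA.1]
  rw [Matrix.trace_mul_comm, ← Matrix.mul_assoc]
  rw [(Matrix.mem_unitaryGroup_iff').mp hA.1.eigenvectorUnitary.2, Matrix.one_mul,
    Matrix.trace_diagonal]
  rw [Complex.re_sum]
  rfl

private lemma psd_smul {A : Matrix n n ℂ} {r : ℝ} (hr : 0 ≤ r) (hA : A.PosSemidef) :
    (r • A).PosSemidef := by
  refine Matrix.PosSemidef.of_dotProduct_mulVec_nonneg ?_ ?_
  · have : (r • A)ᴴ = r • Aᴴ := by
      ext i j
      simp [Matrix.conjTranspose_apply, Complex.real_smul, star_mul', Complex.conj_ofReal]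
    rw [Matrix.IsHermitian, this, hA.1]
  · intro x
    have h := hA.dotProduct_mulVec_nonneg x
    have e : dotProduct (star x) ((r • A) *ᵥ x)
        = (r:ℂ) * dotProduct (star x) (A *ᵥ x) := by
      rw [Matrix.smul_mulVec, dotProduct_smul]
      rw [Complex.real_smul]
    rw [e]
    obtain ⟨h1, h2⟩ := Complex.nonneg_iff.mp h
    refine Complex.nonneg_iff.mpr ⟨?_, ?_⟩
    · simp only [Complex.mul_re, Complex.ofReal_re, Complex.ofReal_im, zero_mul, sub_zero]
      exact mul_nonneg hr h1
    · simp only [Complex.mul_im, Complex.ofReal_re, Complex.ofReal_im, zero_mul, add_zero]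
      rw [← h2, mul_zero]

private lemma traceNorm_nonneg' (A : Matrix n n ℂ) : 0 ≤ traceNorm A :=
  psd_trace_re_nonneg (msqrt_posSemidef (Matrix.posSemidef_conjTranspose_mul_self A))

private lemma fidelity_eq {ρ σ : Matrix n n ℂ} (hρ : ρ.PosSemidef) (hσ : σ.PosSemidef) :
    fidelity ρ σ = ((msqrt (msqrt σ * ρ * msqrt σ)).trace).re := by
  have h1 : (msqrt ρ * msqrt σ)ᴴ * (msqrt ρ * msqrt σ) = msqrt σ * ρ * msqrt σ := by
    rw [Matrix.conjTranspose_mul, (msqrt_posSemidef hρ).1.eq, (msqrt_posSemidef hσ).1.eq,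
      Matrix.mul_assoc, ← Matrix.mul_assoc (msqrt ρ), msqrt_mul_self hρ, ← Matrix.mul_assoc]
  rw [fidelity, traceNorm, h1]

end

section
set_option linter.unusedSectionVars false
set_option maxHeartbeats 1000000

variable {dP 𝒞 : Type*} [Fintype dP] [DecidableEq dP] [Fintype 𝒞] [DecidableEq 𝒞]

/-- The `c`-th diagonal block. -/
private def blk (M : Matrix (dP × 𝒞) (dP × 𝒞) ℂ) (c : 𝒞) : Matrix dP dP ℂ :=
  Matrix.of fun i j => M (i, c) (j, c)

private lemma blk_posSemidef {M : Matrix (dP × 𝒞) (dP × 𝒞) ℂ}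
    (hM : M.PosSemidef) (c : 𝒞) : (blk M c).PosSemidef := by
  refine Matrix.PosSemidef.of_dotProduct_mulVec_nonneg ?_ ?_
  · ext i j
    have := congrFun (congrFun hM.1 (i, c)) (j, c)
    simpa [Matrix.conjTranspose_apply, blk] using this
  · intro x
    have h := hM.dotProduct_mulVec_nonneg (fun m => if m.2 = c then x m.1 else 0)
    have e : dotProduct (star (fun m : dP × 𝒞 => if m.2 = c then x m.1 else 0))
        (M *ᵥ fun m => if m.2 = c then x m.1 else 0)
        = dotProduct (star x) (blk M c *ᵥ x) := by
      simp [dotProduct, Matrix.mulVec, blk, Fintype.sum_prod_type,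
        apply_ite (star : ℂ → ℂ), ite_mul, mul_ite, Finset.mul_sum]
    rwa [e] at h

private lemma posSemidef_blockDiagonal {f : 𝒞 → Matrix dP dP ℂ}
    (hf : ∀ c, (f c).PosSemidef) : (Matrix.blockDiagonal f).PosSemidef := by
  refine Matrix.PosSemidef.of_dotProduct_mulVec_nonneg ?_ ?_
  · show (Matrix.blockDiagonal f)ᴴ = Matrix.blockDiagonal f
    rw [Matrix.blockDiagonal_conjTranspose]
    exact congrArg _ (funext fun c => (hf c).1)
  · intro x
    have e : dotProduct (star x) (Matrix.blockDiagonal f *ᵥ x)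
        = ∑ c, dotProduct (star (fun i => x (i, c))) (f c *ᵥ fun i => x (i, c)) := by
      simp only [dotProduct, Matrix.mulVec, Pi.star_apply,
        Matrix.blockDiagonal_apply, Fintype.sum_prod_type, ite_mul, mul_ite,
        zero_mul, mul_zero, Finset.sum_ite_eq, Finset.sum_ite_eq', Finset.mem_univ, if_true]
      exact Finset.sum_comm
    rw [e]
    exact Finset.sum_nonneg fun c _ => (hf c).dotProduct_mulVec_nonneg _

private lemma msqrt_blockDiagonal {f : 𝒞 → Matrix dP dP ℂ} (hf : ∀ c, (f c).PosSemidef) :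
    msqrt (Matrix.blockDiagonal f) = Matrix.blockDiagonal fun c => msqrt (f c) := by
  refine msqrt_unique (posSemidef_blockDiagonal hf)
    (posSemidef_blockDiagonal fun c => msqrt_posSemidef (hf c)) ?_
  rw [← Matrix.blockDiagonal_mul]
  exact congrArg _ (funext fun c => msqrt_mul_self (hf c))

private lemma blk_blockDiagonal_mul {M : Matrix (dP × 𝒞) (dP × 𝒞) ℂ}
    {g : 𝒞 → Matrix dP dP ℂ} (c : 𝒞) :
    blk (Matrix.blockDiagonal g * M) c = g c * blk M c := by
  ext i j
  simp [blk, Matrix.mul_apply, Fintype.sum_prod_type, Matrix.blockDiagonal_apply, ite_mul]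

private lemma blk_mul_blockDiagonal {M : Matrix (dP × 𝒞) (dP × 𝒞) ℂ}
    {g : 𝒞 → Matrix dP dP ℂ} (c : 𝒞) :
    blk (M * Matrix.blockDiagonal g) c = blk M c * g c := by
  ext i j
  simp [blk, Matrix.mul_apply, Fintype.sum_prod_type, Matrix.blockDiagonal_apply, mul_ite]

private lemma blk_triple {M : Matrix (dP × 𝒞) (dP × 𝒞) ℂ}
    {f g : 𝒞 → Matrix dP dP ℂ} (c : 𝒞) :
    blk (Matrix.blockDiagonal g * M * Matrix.blockDiagonal f) c = g c * blk M c * f c := by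
  rw [blk_mul_blockDiagonal, blk_blockDiagonal_mul]

private lemma pinch_eq_blockDiagonal {M : Matrix (dP × 𝒞) (dP × 𝒞) ℂ} :
    (Matrix.of fun i j => if i.2 = j.2 then M i j else 0) = Matrix.blockDiagonal (blk M) := by
  ext ⟨i, c⟩ ⟨j, c'⟩
  rw [Matrix.blockDiagonal_apply]
  by_cases h : c = c'
  · subst h; simp [blk]
  · simp [h, blk]

private lemma key_pinch {X : Matrix (dP × 𝒞) (dP × 𝒞) ℂ} (hX : X.PosSemidef) :
    (msqrt X).trace.re ≤ ∑ c, (msqrt (blk X c)).trace.re := by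
  classical
  have hH := hX.1
  set U : Matrix (dP × 𝒞) (dP × 𝒞) ℂ := (hH.eigenvectorUnitary : Matrix (dP × 𝒞) (dP × 𝒞) ℂ)
    with hUdef
  set a : dP × 𝒞 → ℝ := hH.eigenvalues with hadef
  have hblk : ∀ c, (blk X c).PosSemidef := fun c => blk_posSemidef hX c
  set Wf : 𝒞 → Matrix dP dP ℂ := fun c => ((hblk c).1.eigenvectorUnitary : Matrix dP dP ℂ)
    with hWfdef
  set W : Matrix (dP × 𝒞) (dP × 𝒞) ℂ := Matrix.blockDiagonal Wf with hWdef
  set V : Matrix (dP × 𝒞) (dP × 𝒞) ℂ := Wᴴ * U with hVdef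
  set μ : 𝒞 → dP → ℝ := fun c => (hblk c).1.eigenvalues with hμdef
  set D : Matrix (dP × 𝒞) (dP × 𝒞) ℂ := Matrix.diagonal (RCLike.ofReal ∘ a) with hDdef
  have hUU : U * star U = 1 := Matrix.mem_unitaryGroup_iff.mp hH.eigenvectorUnitary.2
  have hUU' : star U * U = 1 := Matrix.mem_unitaryGroup_iff'.mp hH.eigenvectorUnitary.2
  have hWc : Wᴴ = Matrix.blockDiagonal (fun c => (Wf c)ᴴ) := Matrix.blockDiagonal_conjTranspose _
  have hWW : Wᴴ * W = 1 := by
    rw [hWc, hWdef, ← Matrix.blockDiagonal_mul]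
    rw [show (fun c => (Wf c)ᴴ * Wf c) = fun _ => (1 : Matrix dP dP ℂ) from
      funext fun c => by
        rw [← Matrix.star_eq_conjTranspose]
        exact Matrix.mem_unitaryGroup_iff'.mp ((hblk c).1.eigenvectorUnitary).2]
    exact Matrix.blockDiagonal_one
  have hWW' : W * Wᴴ = 1 := by
    rw [hWc, hWdef, ← Matrix.blockDiagonal_mul]
    rw [show (fun c => Wf c * (Wf c)ᴴ) = fun _ => (1 : Matrix dP dP ℂ) from
      funext fun c => by
        rw [← Matrix.star_eq_conjTranspose]
        exact Matrix.mem_unitaryGroup_iff.mp ((hblk c).1.eigenvectorUnitary).2]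
    exact Matrix.blockDiagonal_one
  have hVc : Vᴴ = Uᴴ * W := by
    rw [hVdef, Matrix.conjTranspose_mul, Matrix.conjTranspose_conjTranspose]
  have hVV : V * Vᴴ = 1 := by
    rw [hVdef, hVc, Matrix.mul_assoc, ← Matrix.mul_assoc U, ← Matrix.star_eq_conjTranspose U,
      hUU, Matrix.one_mul, hWW]
  have hVV' : Vᴴ * V = 1 := by
    rw [hVdef, hVc, Matrix.mul_assoc, ← Matrix.mul_assoc W, hWW',
      Matrix.one_mul, ← Matrix.star_eq_conjTranspose U, hUU']
  have hXW : Wᴴ * X * W = V * D * Vᴴ := by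
    conv_lhs => rw [hH.spectral_theorem]
    rw [hVdef, hVc, hDdef, hadef, hUdef, Unitary.conjStarAlgAut_apply, Matrix.star_eq_conjTranspose]
    simp only [Matrix.mul_assoc]
  have hdiag : ∀ m : dP × 𝒞, (Wᴴ * X * W) m m = (μ m.2 m.1 : ℂ) := by
    rintro ⟨k, c⟩
    have h1 : (Wᴴ * X * W) (k, c) (k, c) = blk (Wᴴ * X * W) c k k := rfl
    rw [h1, hWc, hWdef, blk_triple, ← Matrix.star_eq_conjTranspose (Wf c)]
    rw [show (star (Wf c) * blk X c * Wf c) = Matrix.diagonal (RCLike.ofReal ∘ μ c) from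
      by
        have := (hblk c).1.conjStarAlgAut_star_eigenvectorUnitary
        rwa [Unitary.conjStarAlgAut_apply, Unitary.coe_star, star_star] at this]
    simp [Matrix.diagonal_apply_eq]
  set T : dP × 𝒞 → dP × 𝒞 → ℝ := fun m j => Complex.normSq (V m j) with hTdef
  have hcoe : (RCLike.ofReal : ℝ → ℂ) = Complex.ofReal := rfl
  have hrc : ∀ z : ℂ, star z * z = ((Complex.normSq z : ℝ) : ℂ) := fun z => by
    rw [show (star z) = (starRingEnd ℂ) z from rfl, ← Complex.normSq_eq_conj_mul_self]
  have hrc' : ∀ z : ℂ, z * star z = ((Complex.normSq z : ℝ) : ℂ) := fun z => by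
    rw [mul_comm]; exact hrc z
  have hmu : ∀ m : dP × 𝒞, μ m.2 m.1 = ∑ j, T m j * a j := by
    intro m
    have h2 : (V * D * Vᴴ) m m = ((∑ j, T m j * a j : ℝ) : ℂ) := by
      rw [Matrix.mul_apply]
      push_cast
      refine Finset.sum_congr rfl fun j _ => ?_
      rw [Matrix.mul_diagonal, Matrix.conjTranspose_apply, Function.comp_apply, hcoe]
      calc V m j * (Complex.ofReal (a j)) * star (V m j)
          = (V m j * star (V m j)) * Complex.ofReal (a j) := by ring
        _ = ((T m j : ℝ) : ℂ) * ((a j : ℝ) : ℂ) := by rw [hrc' (V m j)]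
    have h3 : ((μ m.2 m.1 : ℝ) : ℂ) = ((∑ j, T m j * a j : ℝ) : ℂ) := by
      rw [← h2, ← hXW]; exact (hdiag m).symm
    exact_mod_cast h3
  have hrow : ∀ m : dP × 𝒞, ∑ j, T m j = 1 := by
    intro m
    have h1 : (V * Vᴴ) m m = 1 := by rw [hVV]; simp
    rw [Matrix.mul_apply] at h1
    have h2 : ∀ j, V m j * (Vᴴ) j m = ((T m j : ℝ) : ℂ) := fun j => by
      rw [Matrix.conjTranspose_apply]; exact hrc' (V m j)
    rw [Finset.sum_congr rfl fun j _ => h2 j] at h1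
    exact_mod_cast h1
  have hcol : ∀ j : dP × 𝒞, ∑ m, T m j = 1 := by
    intro j
    have h1 : (Vᴴ * V) j j = 1 := by rw [hVV']; simp
    rw [Matrix.mul_apply] at h1
    have h2 : ∀ m, (Vᴴ) j m * V m j = ((T m j : ℝ) : ℂ) := fun m => by
      rw [Matrix.conjTranspose_apply]; exact hrc (V m j)
    rw [Finset.sum_congr rfl fun m _ => h2 m] at h1
    exact_mod_cast h1
  have hT0 : ∀ m j, 0 ≤ T m j := fun m j => Complex.normSq_nonneg _
  have ha0 : ∀ j, 0 ≤ a j := fun j => hX.eigenvalues_nonneg j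
  rw [trace_msqrt_re hX]
  have hR : ∀ c, (msqrt (blk X c)).trace.re = ∑ k, Real.sqrt (μ c k) :=
    fun c => trace_msqrt_re (hblk c)
  calc ∑ j, Real.sqrt (a j)
      = ∑ j, ∑ m, T m j * Real.sqrt (a j) := by
        refine Finset.sum_congr rfl fun j _ => ?_
        rw [← Finset.sum_mul, hcol j, one_mul]
    _ = ∑ m, ∑ j, T m j * Real.sqrt (a j) := Finset.sum_comm
    _ ≤ ∑ m : dP × 𝒞, Real.sqrt (μ m.2 m.1) := by
        refine Finset.sum_le_sum fun m _ => ?_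
        have hcs := Finset.sum_mul_sq_le_sq_mul_sq Finset.univ
          (fun j => Real.sqrt (T m j)) (fun j => Real.sqrt (T m j) * Real.sqrt (a j))
        have e1 : ∀ j : dP × 𝒞, Real.sqrt (T m j) * (Real.sqrt (T m j) * Real.sqrt (a j))
            = T m j * Real.sqrt (a j) := fun j => by
          rw [← mul_assoc, Real.mul_self_sqrt (hT0 m j)]
        have e2 : ∀ j : dP × 𝒞, Real.sqrt (T m j) ^ 2 = T m j := fun j => Real.sq_sqrt (hT0 m j)
        have e3 : ∀ j : dP × 𝒞, (Real.sqrt (T m j) * Real.sqrt (a j)) ^ 2 = T m j * a j :=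
          fun j => by rw [mul_pow, Real.sq_sqrt (hT0 m j), Real.sq_sqrt (ha0 j)]
        rw [Finset.sum_congr rfl fun j _ => e1 j, Finset.sum_congr rfl fun j _ => e2 j,
          Finset.sum_congr rfl fun j _ => e3 j, hrow m, one_mul, ← hmu m] at hcs
        exact Real.le_sqrt_of_sq_le hcs
    _ = ∑ c, ∑ k, Real.sqrt (μ c k) := by rw [Fintype.sum_prod_type_right]
    _ = ∑ c, (msqrt (blk X c)).trace.re :=
        Finset.sum_congr rfl fun c _ => (hR c).symm

private lemma dot_first_sum (y : 𝒞 → (dP × 𝒞) → ℂ) (v : (dP × 𝒞) → ℂ) :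
    dotProduct (∑ c, y c) v = ∑ c, dotProduct (y c) v := by
  simp only [dotProduct, Finset.sum_apply, Finset.sum_mul]
  exact Finset.sum_comm

private lemma dot_second_sum (u : (dP × 𝒞) → ℂ) (w : 𝒞 → (dP × 𝒞) → ℂ) :
    dotProduct u (∑ c, w c) = ∑ c, dotProduct u (w c) := by
  simp only [dotProduct, Finset.sum_apply, Finset.mul_sum]
  exact Finset.sum_comm

/-- The pinching inequality `ρ ≤ N · pinch ρ`. -/
private lemma pinch_dom {ρ : Matrix (dP × 𝒞) (dP × 𝒞) ℂ} (hρ : ρ.PosSemidef) :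
    (((Fintype.card 𝒞 : ℝ)) • Matrix.blockDiagonal (blk ρ) - ρ).PosSemidef := by
  classical
  have hP : (Matrix.blockDiagonal (blk ρ)).PosSemidef :=
    posSemidef_blockDiagonal fun c => blk_posSemidef hρ c
  have hN0 : (0:ℝ) ≤ (Fintype.card 𝒞 : ℝ) := Nat.cast_nonneg _
  refine Matrix.PosSemidef.of_dotProduct_mulVec_nonneg ?_ ?_
  · exact ((psd_smul hN0 hP).1).sub hρ.1
  · intro x
    set y : 𝒞 → (dP × 𝒞) → ℂ := fun c m => if m.2 = c then x m else 0 with hydef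
    have hx : x = ∑ c, y c := by
      funext m
      rw [Finset.sum_apply]
      simp [hydef]
    set B : 𝒞 → 𝒞 → ℂ := fun c c' => dotProduct (star (y c)) (ρ *ᵥ y c') with hBdef
    have hmv : ∀ v : 𝒞 → (dP × 𝒞) → ℂ, ρ *ᵥ (∑ c, v c) = ∑ c, ρ *ᵥ v c := fun v => by
      funext i
      rw [Finset.sum_apply]
      simp only [Matrix.mulVec, dotProduct, Finset.sum_apply, Finset.mul_sum]
      exact Finset.sum_comm
    have hstar : star (∑ c, y c) = ∑ c, star (y c) := star_sum _ _
    have hform : dotProduct (star x) (ρ *ᵥ x) = ∑ c, ∑ c', B c c' := by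
      conv_lhs => rw [hx, hstar, hmv]
      rw [dot_first_sum]
      exact Finset.sum_congr rfl fun c _ => dot_second_sum _ _
    have hpinch : dotProduct (star x) (Matrix.blockDiagonal (blk ρ) *ᵥ x)
        = ∑ c, B c c := by
      have e : ∀ c : 𝒞, B c c
          = dotProduct (star fun i => x (i, c)) (blk ρ c *ᵥ fun i => x (i, c)) := by
        intro c
        have hy : y c = fun m : dP × 𝒞 => if m.2 = c then (fun i => x (i, c)) m.1 else 0 := by
          funext m
          by_cases hm : m.2 = c
          · simp only [hydef, hm, if_true]
            congr 1
            exact Prod.ext rfl hm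
          · simp [hydef, hm]
        rw [hBdef]
        simp only [hy]
        simp [dotProduct, Matrix.mulVec, blk, Fintype.sum_prod_type,
          apply_ite (star : ℂ → ℂ), ite_mul, mul_ite, Finset.mul_sum]
      -- use the computation from posSemidef_blockDiagonal
      have e2 : dotProduct (star x) (Matrix.blockDiagonal (blk ρ) *ᵥ x)
          = ∑ c, dotProduct (star fun i => x (i, c)) (blk ρ c *ᵥ fun i => x (i, c)) := by
        simp only [dotProduct, Matrix.mulVec, Pi.star_apply,
          Matrix.blockDiagonal_apply, Fintype.sum_prod_type, ite_mul, mul_ite,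
          zero_mul, mul_zero, Finset.sum_ite_eq, Finset.sum_ite_eq', Finset.mem_univ, if_true]
        exact Finset.sum_comm
      rw [e2]
      exact (Finset.sum_congr rfl fun c _ => (e c).symm)
    have hCS : ∀ c c' : 𝒞, 0 ≤ B c c + B c' c' - B c c' - B c' c := by
      intro c c'
      have h := hρ.dotProduct_mulVec_nonneg (y c - y c')
      have e : dotProduct (star (y c - y c')) (ρ *ᵥ (y c - y c'))
          = B c c + B c' c' - B c c' - B c' c := by
        rw [Matrix.mulVec_sub, star_sub, sub_dotProduct, dotProduct_sub,
          dotProduct_sub, hBdef]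
        ring
      rwa [e] at h
    have hsum : (0:ℂ) ≤ ∑ c, ∑ c', (B c c + B c' c' - B c c' - B c' c) :=
      Finset.sum_nonneg fun c _ => Finset.sum_nonneg fun c' _ => hCS c c'
    set N : ℕ := Fintype.card 𝒞 with hNdef
    have hsum2 : ∑ c, ∑ c', (B c c + B c' c' - B c c' - B c' c)
        = ((N:ℂ) * ∑ c, B c c - ∑ c, ∑ c', B c c')
          + ((N:ℂ) * ∑ c, B c c - ∑ c, ∑ c', B c c') := by
      have hswap : ∑ c, ∑ c', B c' c = ∑ c, ∑ c', B c c' := Finset.sum_comm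
      simp only [Finset.sum_add_distrib, Finset.sum_sub_distrib, Finset.sum_const,
        Finset.card_univ, nsmul_eq_mul, hswap]
      push_cast
      rw [← Finset.mul_sum]
      ring
    have hineq : (0:ℂ) ≤ (N:ℂ) * ∑ c, B c c - ∑ c, ∑ c', B c c' := by
      rw [hsum2] at hsum
      obtain ⟨h1, h2⟩ := Complex.nonneg_iff.mp hsum
      rw [Complex.add_re] at h1
      rw [Complex.add_im] at h2
      exact Complex.nonneg_iff.mpr ⟨by linarith, by linarith⟩
    have egoal : dotProduct (star x)
        ((((N:ℕ):ℝ) • Matrix.blockDiagonal (blk ρ) - ρ) *ᵥ x)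
        = (N:ℂ) * ∑ c, B c c - ∑ c, ∑ c', B c c' := by
      rw [Matrix.sub_mulVec, dotProduct_sub, Matrix.smul_mulVec,
        dotProduct_smul, hform, hpinch]
      rw [Complex.real_smul]
      push_cast
      ring
    rw [hNdef] at egoal
    rw [egoal]
    exact hineq

end
end SPCAux


/-- Smoothing preserves classicality: if `ρ_{PQ}` is classical-quantum with `Q`
classical in the eigenbasis of `σ_Q`, and `ρ'_{PQ} ∈ B^ε(ρ_{PQ})` achieves the minimum
of `D_max(·‖(·)_P ⊗ σ_Q)` over the ε-ball, then the state `ρ''` obtained by measuring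
(pinching) `ρ'` in the eigenbasis of `σ_Q` satisfies `ρ'' ∈ B^ε(ρ_{PQ})` and
`D_max(ρ''‖ρ''_P⊗σ_Q) ≤ D_max(ρ'‖ρ'_P⊗σ_Q)`. -/
theorem smoothing_preserves_classicality {dP 𝒞 : Type*} [Fintype dP] [DecidableEq dP]
    [Fintype 𝒞] [DecidableEq 𝒞]
    (p q : 𝒞 → ℝ) (hp : ∀ c, 0 ≤ p c) (hp1 : ∑ c, p c = 1)
    (hq : ∀ c, 0 ≤ q c) (hq1 : ∑ c, q c = 1)
    (ρc : 𝒞 → Matrix dP dP ℂ) (hρc : ∀ c, IsState (ρc c))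
    (ρPQ : Matrix (dP × 𝒞) (dP × 𝒞) ℂ)
    (hρPQ : ρPQ = ∑ c, p c • (ρc c ⊗ₖ Matrix.single c c (1 : ℂ)))
    (σQ : Matrix 𝒞 𝒞 ℂ) (hσQ : σQ = Matrix.diagonal (fun c => (q c : ℂ)))
    (ε : ℝ) (hε : ε ∈ Set.Ioo (0 : ℝ) 1)
    (ρ' : Matrix (dP × 𝒞) (dP × 𝒞) ℂ) (hρ' : IsState ρ')
    (hball : purifiedDist ρ' ρPQ ≤ ε)
    (hopt : Dmax ρ' (ptraceRight ρ' ⊗ₖ σQ)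
      = sInf {x : ℝ | ∃ ρ₀ : Matrix (dP × 𝒞) (dP × 𝒞) ℂ,
          IsState ρ₀ ∧ purifiedDist ρ₀ ρPQ ≤ ε ∧ x = Dmax ρ₀ (ptraceRight ρ₀ ⊗ₖ σQ)})
    (ρ'' : Matrix (dP × 𝒞) (dP × 𝒞) ℂ)
    (hρ'' : ρ'' = Matrix.of fun i j => if i.2 = j.2 then ρ' i j else 0) :
    purifiedDist ρ'' ρPQ ≤ ε ∧
      Dmax ρ'' (ptraceRight ρ'' ⊗ₖ σQ) ≤ Dmax ρ' (ptraceRight ρ' ⊗ₖ σQ) := by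
  classical
  subst hσQ
  have hρ'psd := hρ'.1
  have hρ''bd : ρ'' = Matrix.blockDiagonal (blk ρ') := by
    rw [hρ'']; exact pinch_eq_blockDiagonal
  have hρ''psd : ρ''.PosSemidef := by
    rw [hρ''bd]; exact posSemidef_blockDiagonal fun c => blk_posSemidef hρ'psd c
  -- Part 1 : the purified distance does not increase under pinching
  have hgpsd : ∀ c, (p c • ρc c).PosSemidef := fun c => psd_smul (hp c) (hρc c).1
  have hρPQbd : ρPQ = Matrix.blockDiagonal (fun c => p c • ρc c) := by
    rw [hρPQ]
    ext ⟨i, c1⟩ ⟨j, c2⟩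
    rw [Matrix.sum_apply, Matrix.blockDiagonal_apply]
    by_cases hc : c1 = c2
    · subst hc
      rw [if_pos rfl, Finset.sum_eq_single c1]
      · simp [Matrix.single]
      · intro b _ hb
        simp [Matrix.single, hb]
      · simp
    · rw [if_neg hc]
      refine Finset.sum_eq_zero fun b _ => ?_
      have hb2 : ¬(b = c1 ∧ b = c2) := by
        rintro ⟨rfl, rfl⟩; exact hc rfl
      simp [Matrix.single, hb2]
  have hρPQpsd : ρPQ.PosSemidef := by
    rw [hρPQbd]; exact posSemidef_blockDiagonal hgpsd
  have hSbd : msqrt ρPQ = Matrix.blockDiagonal (fun c => msqrt (p c • ρc c)) := by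
    rw [hρPQbd]; exact msqrt_blockDiagonal hgpsd
  have hXpsd : (msqrt ρPQ * ρ' * msqrt ρPQ).PosSemidef := by
    have := hρ'psd.mul_mul_conjTranspose_same (msqrt ρPQ)
    rwa [(msqrt_posSemidef hρPQpsd).1.eq] at this
  have hX'' : msqrt ρPQ * ρ'' * msqrt ρPQ
      = Matrix.blockDiagonal (blk (msqrt ρPQ * ρ' * msqrt ρPQ)) := by
    have hblkX : ∀ c, blk (msqrt ρPQ * ρ' * msqrt ρPQ) c
        = msqrt (p c • ρc c) * blk ρ' c * msqrt (p c • ρc c) := by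
      intro c
      conv_lhs => rw [hSbd]
      exact blk_triple c
    rw [hρ''bd]
    conv_lhs => rw [hSbd]
    rw [← Matrix.blockDiagonal_mul, ← Matrix.blockDiagonal_mul]
    exact congrArg _ (funext fun c => (hblkX c).symm)
  have hFle : fidelity ρ' ρPQ ≤ fidelity ρ'' ρPQ := by
    rw [fidelity_eq hρ'psd hρPQpsd, fidelity_eq hρ''psd hρPQpsd, hX'',
      msqrt_blockDiagonal (fun c => blk_posSemidef hXpsd c), Matrix.trace_blockDiagonal,
      Complex.re_sum]
    exact key_pinch hXpsd
  have hF0 : 0 ≤ fidelity ρ' ρPQ := traceNorm_nonneg' _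
  have hpd : purifiedDist ρ'' ρPQ ≤ purifiedDist ρ' ρPQ := by
    unfold purifiedDist
    apply Real.sqrt_le_sqrt
    nlinarith [hFle, hF0]
  refine ⟨hpd.trans hball, ?_⟩
  -- Part 2 : the max-relative entropy does not increase under pinching
  have hPTr : ptraceRight ρ'' = ptraceRight ρ' := by
    ext i j
    rw [hρ'']
    simp [ptraceRight]
  rw [hPTr]
  set σm : Matrix (dP × 𝒞) (dP × 𝒞) ℂ :=
    ptraceRight ρ' ⊗ₖ Matrix.diagonal (fun c => (q c : ℂ)) with hσmdef
  have htρ' : (ptraceRight ρ').trace = ρ'.trace := by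
    simp [Matrix.trace, ptraceRight, Matrix.diag, Fintype.sum_prod_type]
  have htσ : σm.trace = 1 := by
    rw [hσmdef, Matrix.trace_kronecker, htρ', hρ'.2, Matrix.trace_diagonal]
    rw [one_mul, ← Complex.ofReal_sum, hq1, Complex.ofReal_one]
  have htρ'' : ρ''.trace = 1 := by
    rw [← hρ'.2, hρ'']
    simp [Matrix.trace, Matrix.diag]
  have hbdd : ∀ l : ℝ, ((2:ℝ)^l • σm - ρ'').PosSemidef → 0 ≤ l := by
    intro l hl
    have h := psd_trace_re_nonneg hl
    rw [Matrix.trace_sub, Matrix.trace_smul, htσ, htρ''] at h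
    rw [Complex.sub_re, Complex.smul_re, Complex.one_re, smul_eq_mul, mul_one] at h
    by_contra hneg
    push_neg at hneg
    have := Real.rpow_lt_one_of_one_lt_of_neg one_lt_two hneg
    linarith
  have hincl : ∀ l : ℝ, ((2:ℝ)^l • σm - ρ').PosSemidef → ((2:ℝ)^l • σm - ρ'').PosSemidef := by
    intro l h
    have hp2 := posSemidef_blockDiagonal (fun c => blk_posSemidef h c)
    have heq : Matrix.blockDiagonal (blk ((2:ℝ)^l • σm - ρ')) = (2:ℝ)^l • σm - ρ'' := by
      ext ⟨i, c⟩ ⟨j, c'⟩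
      rw [Matrix.blockDiagonal_apply]
      by_cases hc : c = c'
      · subst hc
        simp [blk, hρ'']
      · simp only [hc, if_false]
        rw [hρ'']
        simp [blk, hσmdef, Matrix.sub_apply, Matrix.smul_apply,
          Matrix.diagonal_apply_ne _ hc, hc]
    rwa [heq] at hp2
  rcases Set.eq_empty_or_nonempty {l : ℝ | ((2:ℝ)^l • σm - ρ').PosSemidef} with hS | hS
  · have hNe : Nonempty 𝒞 := by
      by_contra hne
      rw [not_nonempty_iff] at hne
      rw [Finset.univ_eq_empty, Finset.sum_empty] at hq1
      exact zero_ne_one hq1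
    have hNpos : (0:ℝ) < (Fintype.card 𝒞 : ℝ) := by
      exact_mod_cast Fintype.card_pos
    have hS2 : {l : ℝ | ((2:ℝ)^l • σm - ρ'').PosSemidef} = ∅ := by
      rw [Set.eq_empty_iff_forall_notMem]
      intro l hl
      have h2 : (2:ℝ)^(l + Real.logb 2 (Fintype.card 𝒞 : ℝ))
          = (Fintype.card 𝒞 : ℝ) * (2:ℝ)^l := by
        rw [Real.rpow_add two_pos, Real.rpow_logb two_pos (by norm_num) hNpos, mul_comm]
      have hA : ((Fintype.card 𝒞 : ℝ) • ((2:ℝ)^l • σm - ρ'')).PosSemidef :=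
        psd_smul hNpos.le hl
      have hB : ((Fintype.card 𝒞 : ℝ) • ρ'' - ρ').PosSemidef := by
        rw [hρ''bd]; exact pinch_dom hρ'psd
      have hsum := hA.add hB
      have e : (Fintype.card 𝒞 : ℝ) • ((2:ℝ)^l • σm - ρ'') + ((Fintype.card 𝒞 : ℝ) • ρ'' - ρ')
          = (2:ℝ)^(l + Real.logb 2 (Fintype.card 𝒞 : ℝ)) • σm - ρ' := by
        rw [h2, ← smul_smul]
        module
      rw [e] at hsum
      exact Set.eq_empty_iff_forall_notMem.mp hS _ hsum
    show sInf {l : ℝ | ((2:ℝ)^l • σm - ρ'').PosSemidef}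
        ≤ sInf {l : ℝ | ((2:ℝ)^l • σm - ρ').PosSemidef}
    rw [hS2, hS]
  · show sInf {l : ℝ | ((2:ℝ)^l • σm - ρ'').PosSemidef}
        ≤ sInf {l : ℝ | ((2:ℝ)^l • σm - ρ').PosSemidef}
    exact csInf_le_csInf ⟨0, fun l hl => hbdd l hl⟩ hS (fun l hl => hincl l hl)
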